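/- In the scalar blockage channel, for fixed x ≠ 0 and h = 0, the information density evaluated at y = σ_s z satisfies lim_{σ_s → 0} i(0; σ_s z, x) = −log(1−α) for every z ∈ ℝ. -/

import Mathlib

open Real Filter

/-- Information density of the scalar blockage channel. -/
noncomputable def infoDen (α σH2 σs x h y : ℝ) : ℝ :=
  Real.log ((Real.exp (-(y - h * x) ^ 2 / (2 * σs ^ 2)) / Real.sqrt (2 * π * σs ^ 2)) /
    ((1 - α) * Real.exp (-y ^ 2 / (2 * σs ^ 2)) / Real.sqrt (2 * π * σs ^ 2)
      + α * Real.exp (-y ^ 2 / (2 * (x ^ 2 * σH2 + σs ^ 2))) /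
        Real.sqrt (2 * π * (x ^ 2 * σH2 + σs ^ 2))))

/-- In the scalar blockage channel, for fixed `x ≠ 0` and `h = 0`, the information density
evaluated at `y = σ_s z` satisfies `lim_{σ_s → 0⁺} i(0; σ_s z, x) = -log (1-α)` for every
`z ∈ ℝ`. -/
theorem infoDen_limit_highSNR_h_zero (α σH2 x : ℝ) (hα : α ∈ Set.Ioo (0:ℝ) 1)
    (hσH2 : 0 < σH2) (hx : x ≠ 0) (z : ℝ) :
    Tendsto (fun σs : ℝ => infoDen α σH2 σs x 0 (σs * z))
      (nhdsWithin 0 (Set.Ioi 0)) (nhds (-Real.log (1 - α))) := by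
  obtain ⟨hα0, hα1⟩ := hα
  have h1α : (0:ℝ) < 1 - α := by linarith
  set E : ℝ := Real.exp (-z ^ 2 / 2) with hE
  have hEpos : 0 < E := Real.exp_pos _
  set G : ℝ → ℝ := fun σs =>
    E / ((1 - α) * E + α * Real.exp (-(σs * z) ^ 2 / (2 * (x ^ 2 * σH2 + σs ^ 2))) *
      Real.sqrt (2 * π * σs ^ 2) / Real.sqrt (2 * π * (x ^ 2 * σH2 + σs ^ 2))) with hGdef
  -- positivity facts at 0
  have hx2 : 0 < x ^ 2 * σH2 := by positivity
  have hT0pos : 0 < Real.sqrt (2 * π * (x ^ 2 * σH2 + (0:ℝ) ^ 2)) := by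
    apply Real.sqrt_pos.2
    have := Real.pi_pos
    nlinarith
  -- continuity of G at 0
  have hG : ContinuousAt G 0 := by
    apply ContinuousAt.div continuousAt_const
    · apply ContinuousAt.add continuousAt_const
      apply ContinuousAt.div
      · apply ContinuousAt.mul
        · apply ContinuousAt.mul continuousAt_const
          apply Real.continuous_exp.continuousAt.comp
          apply ContinuousAt.div (by fun_prop) (by fun_prop)
          have := Real.pi_pos
          nlinarith
        · exact Real.continuous_sqrt.continuousAt.comp (by fun_prop)
      · exact Real.continuous_sqrt.continuousAt.comp (by fun_prop)
      · exact ne_of_gt hT0pos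
    · -- denominator at 0 is (1-α)E > 0
      have h20 : (2 * π * (0:ℝ) ^ 2) = 0 := by ring
      simp only [h20, Real.sqrt_zero, mul_zero, zero_div, add_zero]
      positivity
  have hG0 : G 0 = E / ((1 - α) * E) := by
    have h20 : (2 * π * (0:ℝ) ^ 2) = 0 := by ring
    simp only [hGdef, h20, Real.sqrt_zero, mul_zero, zero_div, add_zero]
  have hGt : Tendsto G (nhdsWithin 0 (Set.Ioi 0)) (nhds (E / ((1 - α) * E))) := by
    rw [← hG0]
    exact hG.tendsto.mono_left nhdsWithin_le_nhds
  have hval : E / ((1 - α) * E) = (1 - α)⁻¹ := by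
    field_simp
  have hne : E / ((1 - α) * E) ≠ 0 := by rw [hval]; positivity
  have hlog : Tendsto (fun σs => Real.log (G σs)) (nhdsWithin 0 (Set.Ioi 0))
      (nhds (-Real.log (1 - α))) := by
    have := hGt.log hne
    rwa [hval, Real.log_inv] at this
  refine hlog.congr' ?_
  filter_upwards [self_mem_nhdsWithin] with σs hσs
  have hσpos : 0 < σs := hσs
  have hσne : σs ≠ 0 := ne_of_gt hσpos
  have hSpos : 0 < Real.sqrt (2 * π * σs ^ 2) := by
    apply Real.sqrt_pos.2
    have := Real.pi_pos
    positivity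
  have hTpos : 0 < Real.sqrt (2 * π * (x ^ 2 * σH2 + σs ^ 2)) := by
    apply Real.sqrt_pos.2
    have := Real.pi_pos
    positivity
  have hexp : -(σs * z) ^ 2 / (2 * σs ^ 2) = -z ^ 2 / 2 := by
    field_simp
  have harg : -(σs * z - 0 * x) ^ 2 / (2 * σs ^ 2) = -z ^ 2 / 2 := by
    rw [zero_mul, sub_zero]; exact hexp
  unfold infoDen
  rw [harg, hexp]
  congr 1
  rw [hGdef]
  have hdenpos : 0 < (1 - α) * E + α * Real.exp (-(σs * z) ^ 2 / (2 * (x ^ 2 * σH2 + σs ^ 2))) *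
      Real.sqrt (2 * π * σs ^ 2) / Real.sqrt (2 * π * (x ^ 2 * σH2 + σs ^ 2)) := by
    have h2 : 0 < Real.exp (-(σs * z) ^ 2 / (2 * (x ^ 2 * σH2 + σs ^ 2))) := Real.exp_pos _
    positivity
  rw [← hE]
  field_simp
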